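/- For every k ≥ 1, the number 2^k is the smallest even number at height k: H(2^k) = k, and every even natural number n with H(n) = k satisfies n ≥ 2^k. -/

import Mathlib

/-- The height function: H(1) = 0 and H(n) = H(φ(n)) + 1 for n ≥ 2. -/
def H : ℕ → ℕ
  | 0 => 0
  | 1 => 0
  | n + 2 => H (Nat.totient (n + 2)) + 1
  decreasing_by exact Nat.totient_lt _ (by omega)

/-- The sum-of-heights function S(n) = ∑_{k=1}^n H(k). -/
def S (n : ℕ) : ℕ := ∑ k ∈ Finset.Icc 1 n, H k

lemma H_eq (n : ℕ) (h : 2 ≤ n) : H n = H (Nat.totient n) + 1 := by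
  obtain ⟨m, rfl⟩ : ∃ m, n = m + 2 := ⟨n - 2, by omega⟩
  rw [H]

lemma two_totient_le (n : ℕ) (hn : 0 < n) (he : Even n) : 2 * Nat.totient n ≤ n := by
  induction n using Nat.strong_induction_on with
  | _ n ih =>
    obtain ⟨m, rfl⟩ : ∃ m, n = 2 * m := (even_iff_two_dvd.mp he).elim fun m h => ⟨m, h⟩
    have hm : 0 < m := by omega
    rcases Nat.even_or_odd m with hme | hmo
    · have h2m : (2 : ℕ) ∣ m := even_iff_two_dvd.mp hme
      rw [Nat.totient_mul_of_prime_of_dvd Nat.prime_two h2m]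
      have := ih m (by omega) (by omega) hme
      omega
    · have hcop : Nat.Coprime 2 m := Nat.coprime_two_left.mpr hmo
      rw [Nat.totient_mul hcop, Nat.totient_two, one_mul]
      have := Nat.totient_le m
      omega

lemma H_pos (n : ℕ) (h : 2 ≤ n) : 1 ≤ H n := by
  rw [H_eq n h]; omega

lemma even_lb : ∀ n : ℕ, 0 < n → Even n → 2 ^ (H n) ≤ n := by
  intro n
  induction n using Nat.strong_induction_on with
  | _ n ih =>
    intro hn he
    rcases Nat.lt_or_ge n 4 with h4 | h4
    · interval_cases n
      · simp at he
      · have h2 : H 2 = 1 := by rw [H_eq 2 le_rfl, Nat.totient_two]; rw [H]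
        rw [h2]; norm_num
      · exact absurd he (by decide)
    · have hφ2 : 2 ≤ Nat.totient n := by
        obtain ⟨r, hr⟩ := Nat.totient_even (show 2 < n by omega)
        have hp : 0 < Nat.totient n := Nat.totient_pos.mpr (by omega)
        omega
      have hφe : Even (Nat.totient n) := Nat.totient_even (by omega)
      have hφlt : Nat.totient n < n := Nat.totient_lt n (by omega)
      have hIH := ih (Nat.totient n) hφlt (by omega) hφe
      rw [H_eq n (by omega), pow_succ]
      have := two_totient_le n (by omega) he
      calc 2 ^ H (Nat.totient n) * 2 ≤ Nat.totient n * 2 := by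
            exact Nat.mul_le_mul_right 2 hIH
        _ ≤ n := by omega

lemma H_pow2 : ∀ k : ℕ, H (2 ^ k) = k := by
  intro k
  induction k with
  | zero => rw [pow_zero, H]
  | succ k ih =>
    rw [H_eq (2 ^ (k + 1)) (by have := Nat.one_le_two_pow (n := k); calc (2:ℕ) = 2^1 := rfl
      _ ≤ 2 ^ (k+1) := Nat.pow_le_pow_right (by norm_num) (by omega))]
    rw [Nat.totient_prime_pow Nat.prime_two (Nat.succ_pos k)]
    norm_num [ih]

theorem smallest_even_at_height (k : ℕ) (hk : 1 ≤ k) :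
    H (2 ^ k) = k ∧ ∀ n : ℕ, Even n → H n = k → 2 ^ k ≤ n := by
  refine ⟨H_pow2 k, fun n he hH => ?_⟩
  have hn : 0 < n := by
    rcases Nat.eq_zero_or_pos n with rfl | h
    · rw [show H 0 = 0 from by rw [H]] at hH; omega
    · exact h
  have := even_lb n hn he
  rwa [hH] at this
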